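/- Let K be a category, κ a regular cardinal, and u a semicontinuous Fraïssé sequence of length κ in ↻K. If ↻K has proper amalgamations, then for every semicontinuous sequence x of length ≤ κ in ↻K there exist a strictly increasing map φ from the length of x into κ and ↻K-arrows f_α : x_α → u_{φ(α)} such that for all ξ < η below the length of x: (i) u_{φ(ξ)}^{φ(η)}∘f_ξ = f_η∘x_ξ^η in ↻K, and (ii) r(u_{φ(ξ)}^{φ(η)})∘e(f_η) = e(f_ξ)∘r(x_ξ^η) in K. -/

import Mathlib

open CategoryTheory

universe w v u

variable {C : Type u} [Category.{v} C]

/-- An arrow of the category `↻K`: a pair `(e, r)` of arrows of `K` with `r ∘ e = id`. -/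
@[ext]
structure RPHom (X Y : C) : Type v where
  e : X ⟶ Y
  r : Y ⟶ X
  retract : e ≫ r = 𝟙 X

/-- The category `↻K`: same objects as `K`, arrows are retractive pairs, composed by
`(e g ∘ e f, r f ∘ r g)`. -/
def RP (C : Type u) [Category.{v} C] : Type u := C

instance : Category.{v} (RP C) where
  Hom X Y := RPHom (C := C) X Y
  id X := ⟨𝟙 (show C from X), 𝟙 (show C from X), Category.comp_id (obj := C) _⟩
  comp {X Y Z} f g := ⟨RPHom.e f ≫ RPHom.e g, RPHom.r g ≫ RPHom.r f, by
    exact (Category.assoc (obj := C) _ _ _).trans ((congrArg (fun t => RPHom.e f ≫ t)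
      ((Category.assoc (obj := C) _ _ _).symm.trans ((congrArg (· ≫ RPHom.r f) (RPHom.retract g)).trans
        (Category.id_comp (obj := C) _)))).trans (RPHom.retract f))⟩
  id_comp f := by apply RPHom.ext <;> first | exact Category.id_comp (obj := C) _ | exact Category.comp_id (obj := C) _
  comp_id f := by apply RPHom.ext <;> first | exact Category.id_comp (obj := C) _ | exact Category.comp_id (obj := C) _
  assoc f g h := by apply RPHom.ext <;> first | exact Category.assoc (obj := C) _ _ _ | exact (Category.assoc (obj := C) _ _ _).symm

/-- An object of `↻K`, viewed as an object of `K`. -/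
abbrev RP.toObj (X : RP C) : C := X

/-- The index set of ordinals below `κ`, used to index inductive sequences of length `κ`. -/
abbrev Idx (κ : Ordinal.{w}) : Type (w + 1) := {ξ : Ordinal.{w} // ξ < κ}

/-- An inductive sequence indexed by a preorder `I` is a Fraïssé sequence if it is
cofinal (U) and has the amalgamation property (A). -/
def IsFraisseSeq {D : Type u} [Category.{v} D] {I : Type*} [Preorder I] (F : I ⥤ D) : Prop :=
  (∀ x : D, ∃ ξ : I, Nonempty (x ⟶ F.obj ξ)) ∧
  (∀ (ξ : I) (y : D) (f : F.obj ξ ⟶ y),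
    ∃ (η : I) (h : ξ ≤ η) (g : y ⟶ F.obj η), f ≫ g = F.map (homOfLE h))

/-- A sequence in `↻K` is semicontinuous if its image under the functor `e` is continuous
in `K`: at every limit ordinal `δ` below its length, `x_δ` together with the arrows
`e(x_ξ^δ)` is a colimit in `K`. -/
def IsSemicontinuousSeq {μ : Ordinal.{w}} (x : Idx μ ⥤ RP C) : Prop :=
  ∀ δ : Idx μ, Order.IsSuccLimit δ.1 →
    ∀ (y : C) (g : ∀ ξ : Idx μ, ξ < δ → ((x.obj ξ).toObj ⟶ y)),
      (∀ (ξ η : Idx μ) (hξ : ξ < δ) (hη : η < δ) (h : ξ ≤ η),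
        (x.map (homOfLE h)).e ≫ g η hη = g ξ hξ) →
      ∃! h : (x.obj δ).toObj ⟶ y, ∀ (ξ : Idx μ) (hξ : ξ < δ),
        (x.map (homOfLE hξ.le)).e ≫ h = g ξ hξ

/-- `↻K` has proper amalgamations: every pair of `↻K`-arrows with common domain admits a
proper amalgamation. -/
def HasProperAmalgamations (C : Type u) [Category.{v} C] : Prop :=
  ∀ (Z X Y : C) (f : RPHom Z X) (g : RPHom Z Y),
    ∃ (W : C) (h : RPHom X W) (k : RPHom Y W),
      f.e ≫ h.e = g.e ≫ k.e ∧ h.r ≫ f.r = k.r ≫ g.r ∧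
      f.r ≫ g.e = h.e ≫ k.r ∧ g.r ≫ f.e = k.e ≫ h.r

-- basic simp lemmas

@[simp] lemma RP.comp_e {X Y Z : RP C} (f : X ⟶ Y) (g : Y ⟶ Z) :
    (f ≫ g).e = RPHom.e f ≫ RPHom.e g := rfl

@[simp] lemma RP.comp_r {X Y Z : RP C} (f : X ⟶ Y) (g : Y ⟶ Z) :
    (f ≫ g).r = RPHom.r g ≫ RPHom.r f := rfl

@[simp] lemma RP.id_e (X : RP C) : (𝟙 X : X ⟶ X).e = 𝟙 (RP.toObj X) := rfl
@[simp] lemma RP.id_r (X : RP C) : (𝟙 X : X ⟶ X).r = 𝟙 (RP.toObj X) := rfl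

@[simp] lemma RP.er {X Y : RP C} (f : X ⟶ Y) : RPHom.e f ≫ RPHom.r f = 𝟙 (RP.toObj X) :=
  RPHom.retract f

lemma RP.er_assoc {X Y : RP C} (f : X ⟶ Y) {W : C} (g : RP.toObj X ⟶ W) :
    RPHom.e f ≫ RPHom.r f ≫ g = g := by
  erw [← Category.assoc, RPHom.retract f, Category.id_comp]

section Seq

variable {μ : Ordinal.{w}} (F : Idx μ ⥤ RP C)

lemma map_e_comp {a b c : Idx μ} (h1 : a ≤ b) (h2 : b ≤ c) :
    (F.map (homOfLE (h1.trans h2))).e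
      = (F.map (homOfLE h1)).e ≫ (F.map (homOfLE h2)).e := by
  erw [show homOfLE (h1.trans h2) = homOfLE h1 ≫ homOfLE h2 from rfl, F.map_comp]; rfl

lemma map_r_comp {a b c : Idx μ} (h1 : a ≤ b) (h2 : b ≤ c) :
    (F.map (homOfLE (h1.trans h2))).r
      = (F.map (homOfLE h2)).r ≫ (F.map (homOfLE h1)).r := by
  erw [show homOfLE (h1.trans h2) = homOfLE h1 ≫ homOfLE h2 from rfl, F.map_comp]; rfl

@[simp] lemma map_self (a : Idx μ) (h : a ≤ a) : F.map (homOfLE h) = 𝟙 (F.obj a) := by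
  erw [show homOfLE h = 𝟙 a from rfl, F.map_id]

lemma map_er {a b : Idx μ} (h : a ≤ b) :
    (F.map (homOfLE h)).e ≫ (F.map (homOfLE h)).r = 𝟙 (RP.toObj (F.obj a)) :=
  RPHom.retract _

end Seq
section Construction

variable {κo μ : Ordinal.{w}} (u : Idx κo ⥤ RP C) (x : Idx μ ⥤ RP C)

/-- A candidate value at a single stage: an index below `κ` together with an `↻K`-arrow. -/
abbrev Sol (α : Idx μ) : Type (max (w+1) v) := Σ ζ : Idx κo, ULift.{w+1} (x.obj α ⟶ u.obj ζ)

variable {u x}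

def Sol.hom {α : Idx μ} (p : Sol u x α) : x.obj α ⟶ u.obj p.1 := p.2.down

/-- The invariant relating the values at two stages. -/
def SRel {β γ : Idx μ} (hβγ : β ≤ γ) (p : Sol u x β) (q : Sol u x γ) : Prop :=
  ∃ hζ : p.1 ≤ q.1,
    (β < γ → p.1 < q.1) ∧
    (p.hom ≫ u.map (homOfLE hζ) = x.map (homOfLE hβγ) ≫ q.hom) ∧
    (q.hom.e ≫ (u.map (homOfLE hζ)).r = (x.map (homOfLE hβγ)).r ≫ p.hom.e) ∧
    ((u.map (homOfLE hζ)).e ≫ q.hom.r = p.hom.r ≫ (x.map (homOfLE hβγ)).e)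

lemma rel_refl {β : Idx μ} (p : Sol u x β) : SRel le_rfl p p := by
  refine ⟨le_rfl, fun h => absurd h (lt_irrefl _), ?_, ?_, ?_⟩ <;> simp <;> erw [Category.comp_id, Category.id_comp]

lemma rel_trans {β γ δ : Idx μ} {h1 : β ≤ γ} {h2 : γ ≤ δ}
    {p : Sol u x β} {q : Sol u x γ} {s : Sol u x δ}
    (r1 : SRel h1 p q) (r2 : SRel h2 q s) : SRel (h1.trans h2) p s := by
  obtain ⟨hζ1, hlt1, hi1, hii1, hiii1⟩ := r1
  obtain ⟨hζ2, hlt2, hi2, hii2, hiii2⟩ := r2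
  refine ⟨hζ1.trans hζ2, ?_, ?_, ?_, ?_⟩
  · intro h
    rcases lt_or_eq_of_le h1 with h1' | h1'
    · exact (hlt1 h1').trans_le hζ2
    · exact hζ1.trans_lt (hlt2 (h1'.symm ▸ h))
  · erw [show u.map (homOfLE (hζ1.trans hζ2)) = u.map (homOfLE hζ1) ≫ u.map (homOfLE hζ2) by
      erw [← u.map_comp]; rfl,
      show x.map (homOfLE (h1.trans h2)) = x.map (homOfLE h1) ≫ x.map (homOfLE h2) by
      erw [← x.map_comp]; rfl]
    erw [← Category.assoc, hi1, Category.assoc, hi2, Category.assoc]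
  · erw [map_r_comp u hζ1 hζ2, map_r_comp x h1 h2, ← Category.assoc, hii2,
      Category.assoc, hii1, Category.assoc]
  · erw [map_e_comp u hζ1 hζ2, map_e_comp x h1 h2, Category.assoc, hiii2,
      ← Category.assoc, hiii1, Category.assoc]

end Construction
section Construction2

variable {κo μ : Ordinal.{w}} {u : Idx κo ⥤ RP C} {x : Idx μ ⥤ RP C}


lemma exists_succ_step (hu : IsFraisseSeq u) (hpa : HasProperAmalgamations C) (hκ : Order.IsSuccLimit κo)
    {β α : Idx μ} (hβα : β < α) (p : Sol u x β) :
    ∃ s : Sol u x α, SRel hβα.le p s := by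
  obtain ⟨W, h, k, a1, a2, a3, a4⟩ :=
    hpa _ _ _ (show RPHom (RP.toObj (x.obj β)) (RP.toObj (x.obj α)) from
      x.map (homOfLE hβα.le)) (show RPHom _ _ from p.hom)
  obtain ⟨η, hη, g', hg'⟩ := hu.2 p.1 (show RP C from W)
    (show u.obj p.1 ⟶ (show RP C from W) from k)
  have hsucc : Order.succ p.1.1 < κo := hκ.succ_lt p.1.2
  set ζα : Idx κo := max η ⟨Order.succ p.1.1, hsucc⟩ with hζα
  have hm : η ≤ ζα := le_max_left _ _
  have hζ : p.1 ≤ ζα := hη.trans hm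
  have hlt : p.1 < ζα := lt_of_lt_of_le (show p.1 < (⟨Order.succ p.1.1, hsucc⟩ : Idx κo) from
    Subtype.coe_lt_coe.mp (Order.lt_succ p.1.1)) (le_max_right _ _)
  set m : u.obj η ⟶ u.obj ζα := u.map (homOfLE hm) with hmdef
  set hW : x.obj α ⟶ (show RP C from W) := h with hWdef
  set kW : u.obj p.1 ⟶ (show RP C from W) := k with hKdef
  have key : u.map (homOfLE hζ) = (kW ≫ g') ≫ m := by
    erw [hg', hmdef, ← u.map_comp]; rfl
  have hfh : x.map (homOfLE hβα.le) ≫ hW = p.hom ≫ kW := by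
    apply RPHom.ext
    · exact a1
    · exact a2
  refine ⟨⟨ζα, ⟨hW ≫ g' ≫ m⟩⟩, hζ, fun _ => hlt, ?_, ?_, ?_⟩
  · show p.hom ≫ u.map (homOfLE hζ) = x.map (homOfLE hβα.le) ≫ hW ≫ g' ≫ m
    erw [key, ← Category.assoc (x.map _) hW, hfh, Category.assoc p.hom kW, Category.assoc kW g' m]
  · show (hW ≫ g' ≫ m).e ≫ (u.map (homOfLE hζ)).r
      = (x.map (homOfLE hβα.le)).r ≫ p.hom.e
    erw [key]
    change (hW.e ≫ g'.e ≫ m.e) ≫ m.r ≫ g'.r ≫ kW.r = _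
    repeat erw [Category.assoc]
    erw [RP.er_assoc m, RP.er_assoc g']
    exact a3.symm
  · show (u.map (homOfLE hζ)).e ≫ (hW ≫ g' ≫ m).r
      = p.hom.r ≫ (x.map (homOfLE hβα.le)).e
    erw [key]
    change ((kW.e ≫ g'.e) ≫ m.e) ≫ (m.r ≫ g'.r) ≫ hW.r = _
    repeat erw [Category.assoc]
    erw [RP.er_assoc m, RP.er_assoc g']
    exact a4.symm

end Construction2
section Limit

variable {μ : Ordinal.{w}}

lemma map_comp' (F : Idx μ ⥤ RP C) {a b c : Idx μ} (h1 : a ≤ b) (h2 : b ≤ c) (h3 : a ≤ c) :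
    F.map (homOfLE h3) = F.map (homOfLE h1) ≫ F.map (homOfLE h2) := by
  erw [show homOfLE h3 = homOfLE h1 ≫ homOfLE h2 from rfl, F.map_comp]

lemma map_e_comp' (F : Idx μ ⥤ RP C) {a b c : Idx μ} (h1 : a ≤ b) (h2 : b ≤ c) (h3 : a ≤ c) :
    (F.map (homOfLE h3)).e = (F.map (homOfLE h1)).e ≫ (F.map (homOfLE h2)).e := by
  erw [map_comp' F h1 h2 h3]; rfl

lemma map_r_comp' (F : Idx μ ⥤ RP C) {a b c : Idx μ} (h1 : a ≤ b) (h2 : b ≤ c) (h3 : a ≤ c) :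
    (F.map (homOfLE h3)).r = (F.map (homOfLE h2)).r ≫ (F.map (homOfLE h1)).r := by
  erw [map_comp' F h1 h2 h3]; rfl

variable {κ : Cardinal.{w}} {u : Idx κ.ord ⥤ RP C} {x : Idx μ ⥤ RP C}

lemma exists_limit_step (hκ : κ.IsRegular)
    (husc : IsSemicontinuousSeq u) (hxsc : IsSemicontinuousSeq x) (hμ : μ ≤ κ.ord)
    (δ : Idx μ) (hδ : Order.IsSuccLimit δ.1)
    (F : ∀ β : Idx μ, β < δ → Sol u x β)
    (hF : ∀ β γ (hβ : β < δ) (hγ : γ < δ) (h : β ≤ γ), SRel h (F β hβ) (F γ hγ)) :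
    ∃ s : Sol u x δ, ∀ β (hβ : β < δ), SRel hβ.le (F β hβ) s := by
  classical
  -- the target index θ
  set Φ : ∀ β : Idx μ, β < δ → Idx κ.ord := fun β hβ => (F β hβ).1 with hΦdef
  set θ : Ordinal.{w} :=
    Ordinal.blsub δ.1 (fun ξ h => (Φ ⟨ξ, h.trans δ.2⟩ h).1) with hθdef
  have hθκ : θ < κ.ord := by
    refine Cardinal.blsub_lt_ord_of_isRegular hκ ?_ ?_
    · exact Cardinal.lt_ord.mp (lt_of_lt_of_le δ.2 hμ)
    · exact fun i hi => (Φ ⟨i, hi.trans δ.2⟩ hi).2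
  set θI : Idx κ.ord := ⟨θ, hθκ⟩ with hθI
  have hφθ : ∀ (β : Idx μ) (hβ : β < δ), Φ β hβ < θI := by
    intro β hβ
    exact (show ((Φ β hβ).1 : Ordinal) < θ from Ordinal.lt_blsub _ β.1 hβ)
  -- θ is a limit ordinal
  have hcof : ∀ ζ : Idx κ.ord, ζ < θI → ∃ (ξ : Idx μ) (hξ : ξ < δ), ζ ≤ Φ ξ hξ := by
    intro ζ hζ
    obtain ⟨i, hi, hle⟩ := Ordinal.lt_blsub_iff.mp (show ζ.1 < θ from hζ)
    exact ⟨⟨i, hi.trans δ.2⟩, hi, hle⟩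
  have hθlim : Order.IsSuccLimit θ := by
    erw [Ordinal.isSuccLimit_iff, Order.isSuccPrelimit_iff_succ_lt]
    constructor
    · intro h0
      exact absurd (show ((Φ ⟨0, hδ.pos.trans δ.2⟩ hδ.pos).1 : Ordinal) < θ from
        Ordinal.lt_blsub _ 0 hδ.pos) (by erw [h0]; exact zero_le.not_gt)
    · intro a ha
      obtain ⟨i, hi, hle⟩ := Ordinal.lt_blsub_iff.mp ha
      have hisucc : Order.succ i < δ.1 := hδ.succ_lt hi
      have hmono : (Φ ⟨i, hi.trans δ.2⟩ hi).1 < (Φ ⟨Order.succ i, hisucc.trans δ.2⟩ hisucc).1 := by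
        obtain ⟨_, hlt, _⟩ := hF ⟨i, hi.trans δ.2⟩ ⟨Order.succ i, hisucc.trans δ.2⟩ hi hisucc
          (le_of_lt (Order.lt_succ i))
        exact hlt (Order.lt_succ i)
      calc Order.succ a ≤ Order.succ (Φ ⟨i, hi.trans δ.2⟩ hi).1 := Order.succ_le_succ hle
        _ ≤ (Φ ⟨Order.succ i, hisucc.trans δ.2⟩ hisucc).1 := Order.succ_le_of_lt hmono
        _ < θ := Ordinal.lt_blsub _ _ hisucc

  -- the canonical maps into x_δ, indexed by all ζ < θ
  have indep : ∀ (ζ : Idx κ.ord) (ξ1 ξ2 : Idx μ) (h1 : ξ1 < δ) (h2 : ξ2 < δ) (h12 : ξ1 ≤ ξ2)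
      (hle1 : ζ ≤ Φ ξ1 h1) (hle2 : ζ ≤ Φ ξ2 h2),
      (u.map (homOfLE hle1)).e ≫ (F ξ1 h1).hom.r ≫ (x.map (homOfLE h1.le)).e
        = (u.map (homOfLE hle2)).e ≫ (F ξ2 h2).hom.r ≫ (x.map (homOfLE h2.le)).e := by
    intro ζ ξ1 ξ2 h1 h2 h12 hle1 hle2
    obtain ⟨hζ12, -, -, -, hiii⟩ := hF ξ1 ξ2 h1 h2 h12
    erw [map_e_comp' u hle1 hζ12 hle2]
    repeat erw [Category.assoc]
    congr 1
    erw [← Category.assoc, hiii, Category.assoc, ← map_e_comp' x h12 h2.le h1.le]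
  set G : ∀ ζ : Idx κ.ord, ζ < θI → (RP.toObj (u.obj ζ) ⟶ RP.toObj (x.obj δ)) := fun ζ hζ =>
    (u.map (homOfLE (hcof ζ hζ).choose_spec.choose_spec)).e
      ≫ (F (hcof ζ hζ).choose (hcof ζ hζ).choose_spec.choose).hom.r
      ≫ (x.map (homOfLE ((hcof ζ hζ).choose_spec.choose).le)).e with hGdef
  have Gspec : ∀ (ζ : Idx κ.ord) (hζ : ζ < θI) (ξ : Idx μ) (hξ : ξ < δ) (hle : ζ ≤ Φ ξ hξ),
      G ζ hζ = (u.map (homOfLE hle)).e ≫ (F ξ hξ).hom.r ≫ (x.map (homOfLE hξ.le)).e := by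
    intro ζ hζ ξ hξ hle
    rcases le_total (hcof ζ hζ).choose ξ with h | h
    · exact indep ζ _ ξ _ hξ h _ hle
    · exact (indep ζ ξ _ hξ _ h hle _).symm
  have gcompat : ∀ (ζ η : Idx κ.ord) (hζ : ζ < θI) (hη : η < θI) (h : ζ ≤ η),
      (u.map (homOfLE h)).e ≫ G η hη = G ζ hζ := by
    intro ζ η hζ hη h
    obtain ⟨ξ, hξ, hleη⟩ := hcof η hη
    erw [Gspec η hη ξ hξ hleη, Gspec ζ hζ ξ hξ (h.trans hleη), ← Category.assoc,
      ← map_e_comp' u h hleη (h.trans hleη)]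
  -- uniqueness of maps out of the colimits
  have uniq_u : ∀ {y : C} (h1 h2 : RP.toObj (u.obj θI) ⟶ y),
      (∀ (ζ : Idx κ.ord) (hζ : ζ < θI),
        (u.map (homOfLE hζ.le)).e ≫ h1 = (u.map (homOfLE hζ.le)).e ≫ h2) → h1 = h2 := by
    intro y h1 h2 hcomp
    obtain ⟨t, -, huniq⟩ := husc θI hθlim y (fun ζ hζ => (u.map (homOfLE hζ.le)).e ≫ h1)
      (by intro ζ η hζ hη h; erw [← Category.assoc, ← map_e_comp' u h hη.le hζ.le])
    erw [huniq h1 (fun _ _ => rfl), huniq h2 (fun ζ hζ => (hcomp ζ hζ).symm)]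
  have uniq_x : ∀ {y : C} (h1 h2 : RP.toObj (x.obj δ) ⟶ y),
      (∀ (ξ : Idx μ) (hξ : ξ < δ),
        (x.map (homOfLE hξ.le)).e ≫ h1 = (x.map (homOfLE hξ.le)).e ≫ h2) → h1 = h2 := by
    intro y h1 h2 hcomp
    obtain ⟨t, -, huniq⟩ := hxsc δ hδ y (fun ξ hξ => (x.map (homOfLE hξ.le)).e ≫ h1)
      (by intro ζ η hζ hη h; erw [← Category.assoc, ← map_e_comp' x h hη.le hζ.le])
    erw [huniq h1 (fun _ _ => rfl), huniq h2 (fun ζ hζ => (hcomp ζ hζ).symm)]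
  -- the e-component
  obtain ⟨E, hE, -⟩ := hxsc δ hδ (RP.toObj (u.obj θI))
    (fun ξ hξ => (F ξ hξ).hom.e ≫ (u.map (homOfLE (hφθ ξ hξ).le)).e)
    (by
      intro ξ η hξ hη h
      obtain ⟨hζ, -, hi, -, -⟩ := hF ξ η hξ hη h
      have he := congrArg RPHom.e hi
      simp only [RP.comp_e] at he
      erw [← Category.assoc, ← he, Category.assoc,
        ← map_e_comp' u hζ (hφθ η hη).le (hφθ ξ hξ).le])
  -- the r-component
  obtain ⟨R, hR, -⟩ := husc θI hθlim (RP.toObj (x.obj δ)) G gcompat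
  -- the retraction identity
  have hER : E ≫ R = 𝟙 (RP.toObj (x.obj δ)) := by
    apply uniq_x
    intro ξ hξ
    erw [Category.comp_id, ← Category.assoc, hE ξ hξ, Category.assoc,
      hR (Φ ξ hξ) (hφθ ξ hξ), Gspec (Φ ξ hξ) (hφθ ξ hξ) ξ hξ le_rfl, map_self u,
      RP.id_e, Category.id_comp, RP.er_assoc]
  refine ⟨⟨θI, ⟨⟨E, R, hER⟩⟩⟩, ?_⟩
  intro β hβ
  refine ⟨(hφθ β hβ).le, fun _ => hφθ β hβ, ?_, ?_, ?_⟩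
  · -- (i)
    apply RPHom.ext
    · exact (hE β hβ).symm
    · -- r-components
      show (u.map (homOfLE (hφθ β hβ).le)).r ≫ (F β hβ).hom.r
          = R ≫ (x.map (homOfLE hβ.le)).r
      apply uniq_u
      intro ζ hζ'
      -- choose a common upper index
      obtain ⟨ξc, hξc, hlec⟩ := hcof ζ hζ'
      set ξ' : Idx μ := max ξc β with hξ'def
      have hξ' : ξ' < δ := max_lt hξc hβ
      have hcξ' : ξc ≤ ξ' := le_max_left _ _
      have hβξ' : β ≤ ξ' := le_max_right _ _
      obtain ⟨hΦcξ', -, -, -, -⟩ := hF ξc ξ' hξc hξ' hcξ'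
      have hle' : ζ ≤ Φ ξ' hξ' := hlec.trans hΦcξ'
      obtain ⟨hΦβξ', -, hi', -, -⟩ := hF β ξ' hβ hξ' hβξ'
      have hr' := congrArg RPHom.r hi'
      simp only [RP.comp_r] at hr'
      erw [← Category.assoc ((u.map (homOfLE hζ'.le)).e) R, hR ζ hζ',
        Gspec ζ hζ' ξ' hξ' hle']
      repeat erw [Category.assoc]
      erw [map_r_comp' x hβξ' hξ'.le hβ.le, RP.er_assoc, ← Category.assoc _ _ (RPHom.r _),
        ← hr', map_e_comp' u hle' (hφθ ξ' hξ').le hζ'.le,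
        map_r_comp' u hΦβξ' (hφθ ξ' hξ').le (hφθ β hβ).le]
      repeat erw [Category.assoc]
      erw [RP.er_assoc]
  · -- (ii)
    show E ≫ (u.map (homOfLE (hφθ β hβ).le)).r = (x.map (homOfLE hβ.le)).r ≫ (F β hβ).hom.e
    apply uniq_x
    intro ξ hξ
    set ξ' : Idx μ := max ξ β with hξ'def
    have hξ' : ξ' < δ := max_lt hξ hβ
    have hξξ' : ξ ≤ ξ' := le_max_left _ _
    have hβξ' : β ≤ ξ' := le_max_right _ _
    obtain ⟨hΦβξ', -, -, hii', -⟩ := hF β ξ' hβ hξ' hβξ'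
    erw [map_e_comp' x hξξ' hξ'.le hξ.le]
    repeat erw [Category.assoc]
    erw [← Category.assoc (x.map (homOfLE hξ'.le)).e E, hE ξ' hξ']
    repeat erw [Category.assoc]
    erw [map_r_comp' u hΦβξ' (hφθ ξ' hξ').le (hφθ β hβ).le, RP.er_assoc, hii',
      map_r_comp' x hβξ' hξ'.le hβ.le]
    repeat erw [Category.assoc]
    erw [RP.er_assoc]
  · -- (iii)
    show (u.map (homOfLE (hφθ β hβ).le)).e ≫ R = (F β hβ).hom.r ≫ (x.map (homOfLE hβ.le)).e
    erw [hR (Φ β hβ) (hφθ β hβ), Gspec (Φ β hβ) (hφθ β hβ) β hβ le_rfl, map_self u,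
      RP.id_e, Category.id_comp]

end Limit
section Assemble

variable {μ : Ordinal.{w}} {κ : Cardinal.{w}} {u : Idx κ.ord ⥤ RP C} {x : Idx μ ⥤ RP C}

lemma idx_wf : WellFounded ((· < ·) : Idx μ → Idx μ → Prop) :=
  InvImage.wf Subtype.val Ordinal.lt_wf

lemma exists_step (hκ : κ.IsRegular) (hu : IsFraisseSeq u) (husc : IsSemicontinuousSeq u)
    (hpa : HasProperAmalgamations C) (hμ : μ ≤ κ.ord) (hxsc : IsSemicontinuousSeq x)
    (α : Idx μ) (F : ∀ β : Idx μ, β < α → Sol u x β) :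
    ∃ s : Sol u x α,
      (∀ β γ (hβ : β < α) (hγ : γ < α) (h : β ≤ γ), SRel h (F β hβ) (F γ hγ)) →
      ∀ β (hβ : β < α), SRel hβ.le (F β hβ) s := by
  by_cases hcoh : ∀ β γ (hβ : β < α) (hγ : γ < α) (h : β ≤ γ), SRel h (F β hβ) (F γ hγ)
  · rcases Ordinal.zero_or_succ_or_isSuccLimit α.1 with h0 | ⟨b, hb⟩ | hlim
    · obtain ⟨ξ, ⟨f⟩⟩ := hu.1 (x.obj α)
      exact ⟨⟨ξ, ⟨f⟩⟩, fun _ β hβ =>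
        absurd (show β.1 < (0 : Ordinal) from h0 ▸ hβ) (zero_le.not_gt)⟩
    · have hbα : b < α.1 := hb ▸ Order.lt_succ b
      set βI : Idx μ := ⟨b, hbα.trans α.2⟩ with hβIdef
      have hβα : βI < α := hbα
      obtain ⟨s, hs⟩ := exists_succ_step hu hpa (Cardinal.isSuccLimit_ord hκ.aleph0_le)
        hβα (F βI hβα)
      refine ⟨s, fun hc β hβ => ?_⟩
      have h1 : β.1 ≤ b := Order.lt_succ_iff.mp (show β.1 < Order.succ b from hb ▸ hβ)
      have hββI : β ≤ βI := h1
      exact rel_trans (hc β βI hβ hβα hββI) hs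
    · obtain ⟨s, hs⟩ := exists_limit_step hκ husc hxsc hμ α hlim F hcoh
      exact ⟨s, fun _ => hs⟩
  · obtain ⟨ξ, ⟨f⟩⟩ := hu.1 (x.obj α)
    exact ⟨⟨ξ, ⟨f⟩⟩, fun h => absurd h hcoh⟩

variable (hκ : κ.IsRegular) (hu : IsFraisseSeq u) (husc : IsSemicontinuousSeq u)
  (hpa : HasProperAmalgamations C) (hμ : μ ≤ κ.ord) (hxsc : IsSemicontinuousSeq x)

noncomputable def chain : ∀ α : Idx μ, Sol u x α :=
  WellFounded.fix idx_wf (fun α ih =>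
    (exists_step hκ hu husc hpa hμ hxsc α ih).choose)

lemma chain_eq (α : Idx μ) :
    chain hκ hu husc hpa hμ hxsc α
      = (exists_step hκ hu husc hpa hμ hxsc α
          (fun β _ => chain hκ hu husc hpa hμ hxsc β)).choose :=
  WellFounded.fix_eq _ _ _

lemma chain_coh : ∀ (γ β : Idx μ) (h : β ≤ γ),
    SRel h (chain hκ hu husc hpa hμ hxsc β) (chain hκ hu husc hpa hμ hxsc γ) := by
  intro γ
  induction γ using WellFounded.induction idx_wf with
  | _ γ ih =>
    intro β h
    rcases eq_or_lt_of_le h with h' | h'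
    · subst h'; exact rel_refl _
    · have hspec := (exists_step hκ hu husc hpa hμ hxsc γ
        (fun β' _ => chain hκ hu husc hpa hμ hxsc β')).choose_spec
      erw [chain_eq hκ hu husc hpa hμ hxsc γ]
      exact hspec (fun β' γ' hβ' hγ' h'' => ih γ' hγ' β' h'') β h'
end Assemble
/-- if `u` is a semicontinuous Fraïssé sequence of regular length `κ` in `↻K`
and `↻K` has proper amalgamations, then every semicontinuous sequence of length `≤ κ` in
`↻K` admits a morphism of sequences into `u` which additionally intertwines the `r`- and
`e`-components as in (ii). -/
theorem exists_seqHom_of_semicontinuous_seq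
    (κ : Cardinal.{w}) (hκ : κ.IsRegular)
    (u : Idx κ.ord ⥤ RP C) (hu : IsFraisseSeq u) (husc : IsSemicontinuousSeq u)
    (hpa : HasProperAmalgamations C)
    (μ : Ordinal.{w}) (hμ : μ ≤ κ.ord) (x : Idx μ ⥤ RP C) (hx : IsSemicontinuousSeq x) :
    ∃ (φ : Idx μ → Idx κ.ord) (hφ : StrictMono φ)
      (f : ∀ α : Idx μ, x.obj α ⟶ u.obj (φ α)),
      ∀ (ξ η : Idx μ) (h : ξ < η),
        (f ξ ≫ u.map (homOfLE (hφ h).le) = x.map (homOfLE h.le) ≫ f η) ∧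
        ((f η).e ≫ (u.map (homOfLE (hφ h).le)).r = (x.map (homOfLE h.le)).r ≫ (f ξ).e) := by
  refine ⟨fun α => (chain hκ hu husc hpa hμ hx α).1, ?_, fun α => (chain hκ hu husc hpa hμ hx α).hom, ?_⟩
  · intro a b hab
    obtain ⟨_, hlt, -⟩ := chain_coh hκ hu husc hpa hμ hx b a hab.le
    exact hlt hab
  · intro ξ η h
    obtain ⟨hζ, hlt, hi, hii, -⟩ := chain_coh hκ hu husc hpa hμ hx η ξ h.le
    exact ⟨hi, hii⟩
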